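/- The twelve lines L1: y2=y3=0, L2: y1=y3=0, L3: y2=y4=0, L4: y1-y3=y4=0, L5: y1=y4=0, L6: y2-y4=y3=0, L7: y1-y3-y4=y2+y3=0, L8: y1-y3=y2+y3=0, L9: y2+y3=y4=0, L10: y1-y4=y3=0, L11: y1-y3=y2-y4=0, L12: y1=y2-y4=0 are all contained in the quartic surface Z7. -/
import Mathlib


/-- The defining quartic of the surface `Z₇` in `ℙ³`, as a function of the coordinates. -/
def Z7fun (y1 y2 y3 y4 : ℂ) : ℂ :=
  y1 ^ 2 * y2 ^ 2 + y1 ^ 2 * y2 * y3 - y1 * y2 ^ 2 * y3 - y1 * y2 * y3 ^ 2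
    - y1 ^ 2 * y2 * y4 - y1 * y2 ^ 2 * y4 + y1 * y2 * y3 * y4 - y2 * y3 ^ 2 * y4
    + y1 * y2 * y4 ^ 2 + y3 ^ 2 * y4 ^ 2

/-- The twelve lines `L₁, …, L₁₂` are all contained in the quartic surface `Z₇`. -/
theorem Z7_contains_twelve_lines :
    (∀ y1 y2 y3 y4 : ℂ, y2 = 0 → y3 = 0 → Z7fun y1 y2 y3 y4 = 0) ∧
    (∀ y1 y2 y3 y4 : ℂ, y1 = 0 → y3 = 0 → Z7fun y1 y2 y3 y4 = 0) ∧
    (∀ y1 y2 y3 y4 : ℂ, y2 = 0 → y4 = 0 → Z7fun y1 y2 y3 y4 = 0) ∧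
    (∀ y1 y2 y3 y4 : ℂ, y1 - y3 = 0 → y4 = 0 → Z7fun y1 y2 y3 y4 = 0) ∧
    (∀ y1 y2 y3 y4 : ℂ, y1 = 0 → y4 = 0 → Z7fun y1 y2 y3 y4 = 0) ∧
    (∀ y1 y2 y3 y4 : ℂ, y2 - y4 = 0 → y3 = 0 → Z7fun y1 y2 y3 y4 = 0) ∧
    (∀ y1 y2 y3 y4 : ℂ, y1 - y3 - y4 = 0 → y2 + y3 = 0 → Z7fun y1 y2 y3 y4 = 0) ∧
    (∀ y1 y2 y3 y4 : ℂ, y1 - y3 = 0 → y2 + y3 = 0 → Z7fun y1 y2 y3 y4 = 0) ∧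
    (∀ y1 y2 y3 y4 : ℂ, y2 + y3 = 0 → y4 = 0 → Z7fun y1 y2 y3 y4 = 0) ∧
    (∀ y1 y2 y3 y4 : ℂ, y1 - y4 = 0 → y3 = 0 → Z7fun y1 y2 y3 y4 = 0) ∧
    (∀ y1 y2 y3 y4 : ℂ, y1 - y3 = 0 → y2 - y4 = 0 → Z7fun y1 y2 y3 y4 = 0) ∧
    (∀ y1 y2 y3 y4 : ℂ, y1 = 0 → y2 - y4 = 0 → Z7fun y1 y2 y3 y4 = 0) := by
  refine ⟨?_, ?_, ?_, ?_, ?_, ?_, ?_, ?_, ?_, ?_, ?_, ?_⟩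
  · intro y1 y2 y3 y4 h1 h2
    obtain rfl : y2 = 0 := by linear_combination h1
    obtain rfl : y3 = 0 := by linear_combination h2
    unfold Z7fun
    ring
  · intro y1 y2 y3 y4 h1 h2
    obtain rfl : y1 = 0 := by linear_combination h1
    obtain rfl : y3 = 0 := by linear_combination h2
    unfold Z7fun
    ring
  · intro y1 y2 y3 y4 h1 h2
    obtain rfl : y2 = 0 := by linear_combination h1
    obtain rfl : y4 = 0 := by linear_combination h2
    unfold Z7fun
    ring
  · intro y1 y2 y3 y4 h1 h2
    obtain rfl : y1 = y3 := by linear_combination h1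
    obtain rfl : y4 = 0 := by linear_combination h2
    unfold Z7fun
    ring
  · intro y1 y2 y3 y4 h1 h2
    obtain rfl : y1 = 0 := by linear_combination h1
    obtain rfl : y4 = 0 := by linear_combination h2
    unfold Z7fun
    ring
  · intro y1 y2 y3 y4 h1 h2
    obtain rfl : y2 = y4 := by linear_combination h1
    obtain rfl : y3 = 0 := by linear_combination h2
    unfold Z7fun
    ring
  · intro y1 y2 y3 y4 h1 h2
    obtain rfl : y1 = y3 + y4 := by linear_combination h1
    obtain rfl : y2 = -y3 := by linear_combination h2
    unfold Z7fun
    ring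
  · intro y1 y2 y3 y4 h1 h2
    obtain rfl : y1 = y3 := by linear_combination h1
    obtain rfl : y2 = -y1 := by linear_combination h2
    unfold Z7fun
    ring
  · intro y1 y2 y3 y4 h1 h2
    obtain rfl : y2 = -y3 := by linear_combination h1
    obtain rfl : y4 = 0 := by linear_combination h2
    unfold Z7fun
    ring
  · intro y1 y2 y3 y4 h1 h2
    obtain rfl : y1 = y4 := by linear_combination h1
    obtain rfl : y3 = 0 := by linear_combination h2
    unfold Z7fun
    ring
  · intro y1 y2 y3 y4 h1 h2
    obtain rfl : y1 = y3 := by linear_combination h1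
    obtain rfl : y2 = y4 := by linear_combination h2
    unfold Z7fun
    ring
  · intro y1 y2 y3 y4 h1 h2
    obtain rfl : y1 = 0 := by linear_combination h1
    obtain rfl : y2 = y4 := by linear_combination h2
    unfold Z7fun
    ring
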